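/- Potential monotonicity in dual extrapolation: under the dual extrapolation iteration above, the quantity Φ_t := (1/λ)Σ_{k=0}^{t-1} ⟨g(w_k), w_k - z̄⟩ - ⟨s_t, z_t - z̄⟩ - V_{z̄}(z_t) is nonincreasing in t, i.e., Φ_{t+1} ≤ Φ_t for all t, with Φ₀ = 0. -/

import Mathlib

open scoped RealInnerProductSpace

/-- Gradient inequality for a convex function: the Bregman divergence is nonnegative. -/
lemma bregman_nonneg_aux {E : Type*} [NormedAddCommGroup E]
    [InnerProductSpace ℝ E] [CompleteSpace E] (r : E → ℝ) (r' : E → E)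
    (hdiff : ∀ x, HasGradientAt r (r' x) x)
    (hconv : ConvexOn ℝ Set.univ r) (x y : E) :
    ⟪r' x, y - x⟫ ≤ r y - r x := by
  rcases eq_or_ne y x with rfl | hne
  · simp
  · set φ : ℝ → ℝ := fun t => r (x + t • (y - x)) with hφ
    have hc : ∀ t : ℝ, HasDerivAt (fun t : ℝ => x + t • (y - x)) (y - x) t := by
      intro t
      simpa using ((hasDerivAt_id t).smul_const (y - x)).const_add x
    have hder : HasDerivAt φ ⟪r' x, y - x⟫ 0 := by
      have h0 : HasFDerivAt r (InnerProductSpace.toDual ℝ E (r' x) : E →L[ℝ] ℝ) x :=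
        (hdiff x).hasFDerivAt
      have h0' : HasFDerivAt r (InnerProductSpace.toDual ℝ E (r' x) : E →L[ℝ] ℝ)
          (x + (0 : ℝ) • (y - x)) := by simpa using h0
      have := h0'.comp_hasDerivAt 0 (hc 0)
      have h4 : HasDerivAt (r ∘ fun t : ℝ => x + t • (y - x)) ⟪r' x, y - x⟫ 0 := by
        simpa [real_inner_comm] using this
      exact h4
    have hφconv : ConvexOn ℝ Set.univ φ := by
      have := hconv.comp_affineMap (AffineMap.lineMap x y)
      have heq : φ = r ∘ (AffineMap.lineMap x y : ℝ →ᵃ[ℝ] E) := by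
        funext t
        simp only [φ, Function.comp_apply, AffineMap.lineMap_apply]
        rw [add_comm]
        rfl
      rw [heq]
      simpa using this
    have h01 : (0 : ℝ) < 1 := one_pos
    have := hφconv.le_slope_of_hasDerivAt (Set.mem_univ (0:ℝ)) (Set.mem_univ (1:ℝ)) h01 hder
    have hslope : slope φ 0 1 = r y - r x := by
      simp [slope, φ]
    rw [hslope] at this
    exact this

/-- Potential monotonicity in dual extrapolation (Corollary 2): the quantity
`Φ_t = (1/λ)∑_{k<t} ⟨g(w_k), w_k - z̄⟩ - ⟨s_t, z_t - z̄⟩ - V_{z̄}(z_t)` is nonincreasing in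
`t`, and `Φ₀ = 0`. -/
theorem dual_extrapolation_potential {E : Type*} [NormedAddCommGroup E]
    [InnerProductSpace ℝ E] [CompleteSpace E]
    (r : E → ℝ) (r' : E → E)
    (hdiff : ∀ x, HasGradientAt r (r' x) x)
    (hconv : ConvexOn ℝ Set.univ r)
    (V : E → E → ℝ)
    (hV : ∀ x y, V x y = r y - r x - ⟪r' x, y - x⟫)
    (g : E → E) (lam : ℝ) (hlam : 0 < lam)
    (hrel : ∀ z w u, ⟪g w - g z, w - u⟫ ≤ lam * (V z w + V w u))
    (zbar : E) (s z w : ℕ → E)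
    (hs0 : s 0 = 0)
    (hzt : ∀ t u, ⟪s t, z t - u⟫ ≤ V zbar u - V (z t) u - V zbar (z t))
    (hwt : ∀ t u, ⟪(1 / lam) • g (z t), w t - u⟫ ≤ V (z t) u - V (w t) u - V (z t) (w t))
    (hst : ∀ t, s (t + 1) = s t + (1 / lam) • g (w t))
    (Φ : ℕ → ℝ)
    (hΦ : ∀ t, Φ t = (1 / lam) * ∑ k ∈ Finset.range t, ⟪g (w k), w k - zbar⟫ -
      ⟪s t, z t - zbar⟫ - V zbar (z t)) :
    (∀ t, Φ (t + 1) ≤ Φ t) ∧ Φ 0 = 0 := by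
  have hVnn : ∀ x y, 0 ≤ V x y := by
    intro x y
    have := bregman_nonneg_aux r r' hdiff hconv x y
    rw [hV]; linarith
  have hlam' : lam ≠ 0 := ne_of_gt hlam
  constructor
  · intro t
    have h1 := hzt t (z (t + 1))
    have h2 := hwt t (z (t + 1))
    have h3 := hrel (z t) (w t) (z (t + 1))
    -- rewrite h2
    rw [real_inner_smul_left] at h2
    -- h3 divided by lam
    have h3' : (1 / lam) * (⟪g (w t), w t - z (t + 1)⟫ - ⟪g (z t), w t - z (t + 1)⟫)
        ≤ V (z t) (w t) + V (w t) (z (t + 1)) := by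
      rw [inner_sub_left] at h3
      have := mul_le_mul_of_nonneg_left h3 (le_of_lt (one_div_pos.mpr hlam))
      calc (1 / lam) * (⟪g (w t), w t - z (t + 1)⟫ - ⟪g (z t), w t - z (t + 1)⟫)
          ≤ (1 / lam) * (lam * (V (z t) (w t) + V (w t) (z (t + 1)))) := this
        _ = V (z t) (w t) + V (w t) (z (t + 1)) := by field_simp
    -- key inequality
    have hkey : (1 / lam) * ⟪g (w t), w t - z (t + 1)⟫ + ⟪s t, z t - z (t + 1)⟫
        - V zbar (z (t + 1)) + V zbar (z t) ≤ 0 := by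
      nlinarith [h1, h2, h3', mul_le_mul_of_nonneg_left h2 (le_of_lt hlam)]
    rw [hΦ (t + 1), hΦ t, Finset.sum_range_succ]
    have e1 : ⟪s (t + 1), z (t + 1) - zbar⟫
        = ⟪s t, z (t + 1) - zbar⟫ + (1 / lam) * ⟪g (w t), z (t + 1) - zbar⟫ := by
      rw [hst t, inner_add_left, real_inner_smul_left]
    have e2 : ⟪s t, z t - z (t + 1)⟫ = ⟪s t, z t - zbar⟫ - ⟪s t, z (t + 1) - zbar⟫ := by
      simp [inner_sub_right]
    have e3 : ⟪g (w t), w t - z (t + 1)⟫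
        = ⟪g (w t), w t - zbar⟫ - ⟪g (w t), z (t + 1) - zbar⟫ := by
      simp [inner_sub_right]
    rw [e1]
    rw [e2, e3] at hkey
    ring_nf
    ring_nf at hkey
    linarith
  · rw [hΦ 0]
    have h0 := hzt 0 zbar
    rw [hs0] at h0
    simp only [inner_zero_left] at h0
    have hV1 : V zbar zbar = 0 := by rw [hV]; simp
    have h2 := hVnn (z 0) zbar
    have h3 := hVnn zbar (z 0)
    have hz0 : V zbar (z 0) = 0 := by linarith
    simp [hs0, hz0]
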